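/- Let n ≥ 1, k ≥ 1 be integers and d_1,...,d_k positive integers with Σ_{i=1}^k d_i = n+1. Write n!·F_n(t; d_1,...,d_k) = Σ_{j=0}^n S_j · t^{n-j}, where F_n(t; d_1,...,d_k) = Σ_{I ⊆ {1,...,k}} (-1)^{|I|} C(t+n-d_I, n). Then S_j = 2·S_j(n; d_1,...,d_{k-1}) if k+j is even, and S_j = 0 if k+j is odd, where S_j(n; d_1,...,d_{k-1}) denotes the coefficient of t^{n-j} in n!·F_n(t; d_1,...,d_{k-1}). -/

import Mathlib

open Polynomial Finset

/-- The binomial coefficient polynomial `C(t, n) = (1/n!) ∏_{j=0}^{n-1} (t - j)`,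
as a polynomial in `t` with rational coefficients. -/
noncomputable def binomPoly (n : ℕ) : Polynomial ℚ :=
  Polynomial.C ((n.factorial : ℚ)⁻¹) * ∏ j ∈ Finset.range n, (Polynomial.X - Polynomial.C (j : ℚ))

/-- `Fpoly n s d = Σ_{I ⊆ s} (-1)^{|I|} C(t + n - d_I, n)` where `d_I = Σ_{i ∈ I} d i`.
For `s = {0, 1, …, k-1}` this is the polynomial `F_n(t; d_1, …, d_k)` of the paper. -/
noncomputable def Fpoly (n : ℕ) (s : Finset ℕ) (d : ℕ → ℕ) : Polynomial ℚ :=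
  ∑ I ∈ s.powerset,
    Polynomial.C ((-1 : ℚ) ^ I.card) *
      (binomPoly n).comp (Polynomial.X + Polynomial.C ((n : ℚ) - ∑ i ∈ I, (d i : ℚ)))

lemma neg_one_pow_sub' {a b : ℕ} (h : b ≤ a) : ((-1:ℚ))^(a - b) = (-1)^a * (-1)^b := by
  have h1 : ((-1:ℚ))^(a-b) * (-1)^b = (-1)^a := by
    rw [← pow_add, Nat.sub_add_cancel h]
  have h2 : ((-1:ℚ))^b * (-1)^b = 1 := by
    rw [← pow_add, ← two_mul, pow_mul]; norm_num
  calc ((-1:ℚ))^(a-b) = (-1)^(a-b) * ((-1)^b * (-1)^b) := by rw [h2, mul_one]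
    _ = (-1)^a * (-1)^b := by rw [← mul_assoc, h1]

lemma binomPoly_eval_reflect (n : ℕ) (y : ℚ) :
    (binomPoly n).eval (-y - 1) = (-1)^n * (binomPoly n).eval (y + n) := by
  simp only [binomPoly, eval_mul, eval_C, eval_prod, eval_sub, eval_X]
  have h1 : ∏ j ∈ Finset.range n, (-y - 1 - (j:ℚ)) = (-1)^n * ∏ j ∈ Finset.range n, (y + 1 + j) := by
    have h : ∀ j ∈ Finset.range n, (-y - 1 - (j:ℚ)) = (-1) * (y + 1 + j) := fun j _ => by ring
    rw [Finset.prod_congr rfl h, Finset.prod_mul_distrib, Finset.prod_const, Finset.card_range]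
  have h2 : ∏ j ∈ Finset.range n, (y + (n:ℚ) - (j:ℚ)) = ∏ j ∈ Finset.range n, (y + 1 + j) := by
    rw [← Finset.prod_range_reflect (fun j => (y + 1 + (j:ℚ)))]
    refine Finset.prod_congr rfl (fun j hj => ?_)
    have hj' := Finset.mem_range.mp hj
    have h3 : n - 1 - j = n - (j + 1) := by omega
    rw [h3, Nat.cast_sub (by omega)]
    push_cast; ring
  rw [h1, h2]; ring

lemma Fpoly_eval_reflect (n : ℕ) (s : Finset ℕ) (d : ℕ → ℕ) (m : ℕ)
    (hm : ∑ i ∈ s, d i = m) (x : ℚ) :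
    (Fpoly n s d).eval ((m:ℚ) - 1 - n - x) = (-1)^(s.card + n) * (Fpoly n s d).eval x := by
  simp only [Fpoly, eval_finset_sum, eval_mul, eval_C, eval_comp, eval_add, eval_X,
    Finset.mul_sum]
  refine Finset.sum_nbij' (i := fun I => s \ I) (j := fun J => s \ J) ?_ ?_ ?_ ?_ ?_
  · intro I hI
    exact Finset.mem_powerset.mpr (Finset.sdiff_subset)
  · intro J hJ
    exact Finset.mem_powerset.mpr (Finset.sdiff_subset)
  · intro I hI
    exact Finset.sdiff_sdiff_eq_self (Finset.mem_powerset.mp hI)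
  · intro J hJ
    exact Finset.sdiff_sdiff_eq_self (Finset.mem_powerset.mp hJ)
  · intro I hI
    have hIs : I ⊆ s := Finset.mem_powerset.mp hI
    have hcard : (s \ I).card = s.card - I.card := Finset.card_sdiff_of_subset hIs
    have hsum : ∑ i ∈ s \ I, (d i : ℚ) = (m:ℚ) - ∑ i ∈ I, (d i : ℚ) := by
      rw [Finset.sum_sdiff_eq_sub hIs]
      congr 1
      rw [← Nat.cast_sum, hm]
    have harg : (m:ℚ) - 1 - n - x + ((n:ℚ) - ∑ i ∈ I, (d i : ℚ))
        = -(x + (∑ i ∈ I, (d i : ℚ)) - (m:ℚ)) - 1 := by ring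
    rw [harg, binomPoly_eval_reflect]
    have harg2 : x + (∑ i ∈ I, (d i : ℚ)) - (m:ℚ) + (n:ℚ)
        = x + ((n:ℚ) - ∑ i ∈ s \ I, (d i : ℚ)) := by rw [hsum]; ring
    rw [harg2, hcard, neg_one_pow_sub' (Finset.card_le_card hIs), pow_add]
    have hsq : ((-1:ℚ))^s.card * (-1)^s.card = 1 := by
      rw [← pow_add, ← two_mul, pow_mul]; norm_num
    linear_combination (-((-1:ℚ)^I.card * (-1)^n *
      eval (x + ((n:ℚ) - ∑ i ∈ s \ I, (d i : ℚ))) (binomPoly n))) * hsq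

lemma Fpoly_reflect (n : ℕ) (s : Finset ℕ) (d : ℕ → ℕ) (m : ℕ) (hm : ∑ i ∈ s, d i = m) :
    (Fpoly n s d).comp (Polynomial.C ((m:ℚ) - 1 - n) - Polynomial.X)
      = Polynomial.C ((-1:ℚ)^(s.card + n)) * Fpoly n s d := by
  apply Polynomial.funext
  intro x
  rw [eval_comp, eval_mul, eval_C]
  simp only [eval_sub, eval_C, eval_X]
  exact Fpoly_eval_reflect n s d m hm x

lemma Fpoly_insert (n : ℕ) (s : Finset ℕ) (a : ℕ) (ha : a ∉ s) (d : ℕ → ℕ) :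
    Fpoly n (insert a s) d = Fpoly n s d
      - (Fpoly n s d).comp (Polynomial.X - Polynomial.C (d a : ℚ)) := by
  apply Polynomial.funext
  intro x
  simp only [Fpoly, eval_sub, eval_comp, eval_finset_sum, eval_mul, eval_C, eval_add, eval_X]
  rw [Finset.sum_powerset_insert ha]
  rw [sub_eq_add_neg, ← Finset.sum_neg_distrib]
  congr 1
  refine Finset.sum_congr rfl (fun I hI => ?_)
  have hIs : I ⊆ s := Finset.mem_powerset.mp hI
  have haI : a ∉ I := fun h => ha (hIs h)
  rw [Finset.card_insert_of_notMem haI, Finset.sum_insert haI]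
  have : x + ((n:ℚ) - ((d a : ℚ) + ∑ i ∈ I, (d i : ℚ)))
      = x - (d a : ℚ) + ((n:ℚ) - ∑ i ∈ I, (d i : ℚ)) := by ring
  rw [this, pow_succ]
  ring

lemma coeff_comp_neg_X (p : Polynomial ℚ) (i : ℕ) :
    (p.comp (-Polynomial.X)).coeff i = (-1)^i * p.coeff i := by
  induction p using Polynomial.induction_on' with
  | add p q hp hq => simp [add_comp, hp, hq, mul_add]
  | monomial m a =>
    rw [← Polynomial.C_mul_X_pow_eq_monomial, mul_comp, C_comp, pow_comp, X_comp]
    have hX : (-X : Polynomial ℚ)^m = Polynomial.C ((-1:ℚ)^m) * X^m := by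
      rw [neg_pow, map_pow, map_neg, map_one]
    rw [hX, ← mul_assoc, mul_comm (Polynomial.C a), mul_assoc]
    simp only [coeff_C_mul, coeff_X_pow]
    rcases eq_or_ne i m with h | h
    · subst h; simp
    · simp [h, Ne.symm h]


/-- Lemma 3.5 of the paper. If `Σ_{i=1}^k d_i = n + 1`, then the
coefficient `S_j` of `t^{n-j}` in `n!·F_n(t; d_1,…,d_k)` equals twice the corresponding
coefficient of `n!·F_n(t; d_1,…,d_{k-1})` when `k + j` is even, and vanishes when
`k + j` is odd. -/
theorem statement2 (n k : ℕ) (hn : 1 ≤ n) (hk : 1 ≤ k) (d : ℕ → ℕ)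
    (hd : ∀ i ∈ Finset.range k, 0 < d i)
    (hsum : ∑ i ∈ Finset.range k, d i = n + 1) :
    ∀ j ≤ n,
      if Even (k + j) then
        (Polynomial.C (n.factorial : ℚ) * Fpoly n (Finset.range k) d).coeff (n - j)
          = 2 * (Polynomial.C (n.factorial : ℚ) * Fpoly n (Finset.range (k - 1)) d).coeff (n - j)
      else
        (Polynomial.C (n.factorial : ℚ) * Fpoly n (Finset.range k) d).coeff (n - j) = 0 := by
  intro j hj
  have hins : Finset.range k = insert (k - 1) (Finset.range (k - 1)) := by
    conv_lhs => rw [show k = (k - 1) + 1 by omega]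
    rw [Finset.range_add_one]
  have hma : (∑ i ∈ Finset.range (k - 1), d i) + d (k - 1) = n + 1 := by
    rw [← Finset.sum_range_succ, ← show k = (k - 1) + 1 by omega, hsum]
  have hda : ((∑ i ∈ Finset.range (k - 1), d i : ℕ) : ℚ) - 1 - n = -(d (k - 1) : ℚ) := by
    have : ((∑ i ∈ Finset.range (k - 1), d i : ℕ) : ℚ) + (d (k - 1) : ℚ) = (n : ℚ) + 1 := by
      exact_mod_cast hma
    linarith
  have hrefl := Fpoly_reflect n (Finset.range (k - 1)) d (∑ i ∈ Finset.range (k - 1), d i) rfl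
  rw [hda, Finset.card_range] at hrefl
  have hsplit : Fpoly n (Finset.range k) d
      = Fpoly n (Finset.range (k - 1)) d
        - Polynomial.C ((-1:ℚ)^(k - 1 + n)) * (Fpoly n (Finset.range (k - 1)) d).comp (-Polynomial.X) := by
    rw [hins, Fpoly_insert n (Finset.range (k - 1)) (k - 1) Finset.notMem_range_self d]
    congr 1
    have hcompeq : (Polynomial.X - Polynomial.C (d (k - 1) : ℚ))
        = (Polynomial.C (-(d (k - 1) : ℚ)) - Polynomial.X).comp (-Polynomial.X) := by
      rw [sub_comp, C_comp, X_comp, map_neg]; ring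
    rw [hcompeq, ← Polynomial.comp_assoc, hrefl, mul_comp, C_comp]
  have hcoef : (Polynomial.C (n.factorial : ℚ) * Fpoly n (Finset.range k) d).coeff (n - j)
      = (1 - (-1:ℚ)^(k - 1 + n) * (-1)^(n - j))
        * ((Polynomial.C (n.factorial : ℚ) * Fpoly n (Finset.range (k - 1)) d).coeff (n - j)) := by
    rw [hsplit]
    simp only [coeff_C_mul, coeff_sub, coeff_comp_neg_X]
    ring
  have hsign : (-1:ℚ)^(k - 1 + n) * (-1)^(n - j) = -(-1:ℚ)^(k + j) := by
    rw [neg_one_pow_sub' hj, pow_add, show k + j = ((k - 1) + j) + 1 by omega, pow_succ, pow_add]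
    have hsq : ((-1:ℚ))^n * (-1)^n = 1 := by
      rw [← pow_add, ← two_mul, pow_mul]; norm_num
    linear_combination ((-1:ℚ)^(k-1) * (-1)^j) * hsq
  rw [hsign] at hcoef
  by_cases hpar : Even (k + j)
  · rw [if_pos hpar, hcoef, hpar.neg_one_pow]; ring
  · rw [if_neg hpar, hcoef, (Nat.not_even_iff_odd.mp hpar).neg_one_pow]; ring
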